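/- Let X1, ..., XQ be binary random variables (Q ≥ 4) that are mutually conditionally independent given a binary variable L, with all marginals strictly in (0,1), and suppose each correlation ρ(Xi, L) satisfies 0 < ρ(Xi, L) < 1. Then the correlation matrix P of X1,...,XQ is a positive tetrad correlation matrix: 0 < ρ(Xi,Xj) < 1 for i ≠ j and ρ(Xi,Xh)·ρ(Xj,Xk) = ρ(Xj,Xh)·ρ(Xi,Xk) for all distinct i,j,h,k. -/

import Mathlib

/-- Q ≥ 4 binary items mutually conditionally independent given a binary L
(joint factorizes as P(L)·∏ P(Xi|L)), with nondegenerate marginals and proper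
positive correlations 0 < ρ(Xi,L) < 1, have a positive tetrad correlation matrix:
0 < ρ(Xi,Xj) < 1 for i ≠ j and vanishing tetrads. -/
theorem binary_star_graph_positive_tetrad
    (Q : ℕ) (hQ : 4 ≤ Q)
    (pL : Fin 2 → ℝ) (q : Fin Q → Fin 2 → Fin 2 → ℝ)
    (hpLnn : ∀ l, 0 ≤ pL l) (hpLsum : pL 0 + pL 1 = 1)
    (hqnn : ∀ i x l, 0 ≤ q i x l) (hqsum : ∀ i l, q i 0 l + q i 1 l = 1)
    (m : Fin Q → ℝ) (hm : ∀ i, m i = ∑ l, pL l * q i 1 l)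
    (mL : ℝ) (hmL : mL = pL 1)
    (hmarg : ∀ i, 0 < m i ∧ m i < 1) (hmargL : 0 < mL ∧ mL < 1)
    (ρL : Fin Q → ℝ)
    (hρL : ∀ i, ρL i = (pL 1 * q i 1 1 - m i * mL) /
      Real.sqrt (m i * (1 - m i) * (mL * (1 - mL))))
    (hρLpos : ∀ i, 0 < ρL i ∧ ρL i < 1)
    (ρ : Fin Q → Fin Q → ℝ)
    (hρ : ∀ i j, ρ i j = ((∑ l, pL l * q i 1 l * q j 1 l) - m i * m j) /
      Real.sqrt (m i * (1 - m i) * (m j * (1 - m j)))) :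
    (∀ i j, i ≠ j → 0 < ρ i j ∧ ρ i j < 1) ∧
    (∀ i j h k : Fin Q, i ≠ j → i ≠ h → i ≠ k → j ≠ h → j ≠ k → h ≠ k →
      ρ i h * ρ j k = ρ j h * ρ i k) := by
  have hc : 0 < mL * (1 - mL) := mul_pos hmargL.1 (by linarith [hmargL.2])
  have key : ∀ i j, ρ i j = ρL i * ρL j := by
    intro i j
    have hai : 0 < m i * (1 - m i) :=
      mul_pos (hmarg i).1 (by linarith [(hmarg i).2])
    have haj : 0 < m j * (1 - m j) :=
      mul_pos (hmarg j).1 (by linarith [(hmarg j).2])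
    set sa := Real.sqrt (m i * (1 - m i)) with hsa
    set sb := Real.sqrt (m j * (1 - m j)) with hsb
    set sc := Real.sqrt (mL * (1 - mL)) with hsc
    have hsapos : 0 < sa := Real.sqrt_pos.mpr hai
    have hsbpos : 0 < sb := Real.sqrt_pos.mpr haj
    have hscpos : 0 < sc := Real.sqrt_pos.mpr hc
    have hscsq : sc * sc = mL * (1 - mL) := Real.mul_self_sqrt hc.le
    have h1 : Real.sqrt (m i * (1 - m i) * (m j * (1 - m j))) = sa * sb :=
      Real.sqrt_mul hai.le _
    have h2 : Real.sqrt (m i * (1 - m i) * (mL * (1 - mL))) = sa * sc :=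
      Real.sqrt_mul hai.le _
    have h3 : Real.sqrt (m j * (1 - m j) * (mL * (1 - mL))) = sb * sc :=
      Real.sqrt_mul haj.le _
    -- numerator identity
    have hp0 : pL 0 = 1 - pL 1 := by linarith
    have hnum :
        ((∑ l, pL l * q i 1 l * q j 1 l) - m i * m j) * (mL * (1 - mL)) =
        (pL 1 * q i 1 1 - m i * mL) * (pL 1 * q j 1 1 - m j * mL) := by
      have hmi := hm i
      have hmj := hm j
      simp only [Fin.sum_univ_two] at hmi hmj ⊢
      rw [hmi, hmj, hmL, hp0]
      ring
    simp only [Fin.sum_univ_two] at hnum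
    rw [hρ, hρL, hρL, h1, h2, h3]
    field_simp
    rw [show sc ^ 2 = mL * (1 - mL) by
      rw [← hscsq]; ring, Fin.sum_univ_two]
    linear_combination hnum
  constructor
  · intro i j hij
    rw [key]
    refine ⟨mul_pos (hρLpos i).1 (hρLpos j).1, ?_⟩
    nlinarith [(hρLpos i).1, (hρLpos i).2, (hρLpos j).1, (hρLpos j).2]
  · intro i j h k _ _ _ _ _ _
    rw [key, key, key, key]; ring
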